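/- Let ν>0 and Σ = {(x₁,x₂) ∈ ℝ² : 0 ≤ x₁ ≤ 1, x₁^{ν+1} ≤ x₂ ≤ 1}. Then Σ has the uniform reachability property: there exists a modulus of continuity ω (a nondecreasing function ω:[0,∞)→[0,∞) with ω(r)→0 as r→0⁺) such that for all z₁,z₂ ∈ Σ there exist δ ∈ [0, ω(|z₁−z₂|)] and a pair (y,α), with α ∈ L²(0,δ), satisfying the Grushin-type dynamics on [0,δ], y(s) ∈ Σ for all s ∈ [0,δ], y(0)=z₁, y(δ)=z₂, and ‖α‖_{L²(0,δ)} ≤ ω(|z₁−z₂|). -/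

import Mathlib

open MeasureTheory Set Filter Topology

set_option maxHeartbeats 1000000
noncomputable section

/-- Squared Euclidean norm on ℝ². -/
def sq2 (v : ℝ × ℝ) : ℝ := v.1 ^ 2 + v.2 ^ 2

/-- Euclidean norm on ℝ². -/
def enorm2 (v : ℝ × ℝ) : ℝ := Real.sqrt (sq2 v)

/-- `(y, α)` is an admissible trajectory for the Grushin-type dynamics on `[t,T]`,
starting from `x` and constrained to the set `S`:  `y ∈ W^{1,1}`, `α` measurable,
`y₁' = α₁`, `y₂' = |y₁|^ν α₂` a.e. (in integral form), `y(t) = x`, `y(s) ∈ S`. -/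
def Admissible (ν : ℝ) (S : Set (ℝ × ℝ)) (t T : ℝ) (x : ℝ × ℝ)
    (y α : ℝ → ℝ × ℝ) : Prop :=
  Measurable α ∧
  IntervalIntegrable (fun τ => (α τ).1) volume t T ∧
  IntervalIntegrable (fun τ => |(y τ).1| ^ ν * (α τ).2) volume t T ∧
  (∀ s ∈ Icc t T, (y s).1 = x.1 + ∫ τ in t..s, (α τ).1) ∧
  (∀ s ∈ Icc t T, (y s).2 = x.2 + ∫ τ in t..s, |(y τ).1| ^ ν * (α τ).2) ∧
  (∀ s ∈ Icc t T, y s ∈ S)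

/-- `α ∈ L²(t,T)`. -/
def InL2 (α : ℝ → ℝ × ℝ) (t T : ℝ) : Prop :=
  IntervalIntegrable (fun τ => sq2 (α τ)) volume t T

/-- The cost `J_t(x;(y,α))`. -/
def cost (l : ℝ × ℝ → ℝ → ℝ) (g : ℝ × ℝ → ℝ) (t T : ℝ) (y α : ℝ → ℝ × ℝ) : ℝ :=
  (∫ τ in t..T, (sq2 (α τ) / 2 + l (y τ) τ)) + g (y T)

/-- `Γ_t[x]`: admissible trajectories from `(x,t)` with finite cost (`α ∈ L²`). -/
def Gamma (ν : ℝ) (S : Set (ℝ × ℝ)) (t T : ℝ) (x : ℝ × ℝ) :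
    Set ((ℝ → ℝ × ℝ) × (ℝ → ℝ × ℝ)) :=
  {p | Admissible ν S t T x p.1 p.2 ∧ InL2 p.2 t T}

/-- `Γ_t^{opt}[x]`: optimal trajectories. -/
def GammaOpt (ν : ℝ) (S : Set (ℝ × ℝ)) (l : ℝ × ℝ → ℝ → ℝ) (g : ℝ × ℝ → ℝ)
    (t T : ℝ) (x : ℝ × ℝ) : Set ((ℝ → ℝ × ℝ) × (ℝ → ℝ × ℝ)) :=
  {p | p ∈ Gamma ν S t T x ∧
    ∀ q ∈ Gamma ν S t T x, cost l g t T p.1 p.2 ≤ cost l g t T q.1 q.2}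

/-- The value function `u(x,t)`. -/
def valueFun (ν : ℝ) (S : Set (ℝ × ℝ)) (l : ℝ × ℝ → ℝ → ℝ) (g : ℝ × ℝ → ℝ)
    (T : ℝ) (x : ℝ × ℝ) (t : ℝ) : ℝ :=
  sInf ((fun p => cost l g t T p.1 p.2) '' Gamma ν S t T x)

/-- Closed graph property of `Γ_t^{opt}[x]`. -/
def ClosedGraphAt (ν : ℝ) (S : Set (ℝ × ℝ)) (l : ℝ × ℝ → ℝ → ℝ) (g : ℝ × ℝ → ℝ)
    (t T : ℝ) (x : ℝ × ℝ) : Prop :=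
  ∀ (xs : ℕ → ℝ × ℝ) (ys as : ℕ → ℝ → ℝ × ℝ) (y : ℝ → ℝ × ℝ),
    (∀ n, xs n ∈ S) → Tendsto xs atTop (𝓝 x) →
    (∀ n, (ys n, as n) ∈ GammaOpt ν S l g t T (xs n)) →
    TendstoUniformlyOn ys y atTop (Icc t T) →
    ∃ α, (y, α) ∈ GammaOpt ν S l g t T x

/-- Approximation property at `x` for initial time `t`. -/
def ApproxProperty (ν : ℝ) (S : Set (ℝ × ℝ)) (l : ℝ × ℝ → ℝ → ℝ) (g : ℝ × ℝ → ℝ)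
    (t T : ℝ) (x : ℝ × ℝ) : Prop :=
  ∀ y α, (y, α) ∈ Gamma ν S t T x →
    ∀ xs : ℕ → ℝ × ℝ, (∀ n, xs n ∈ S) → Tendsto xs atTop (𝓝 x) →
      ∃ ys as : ℕ → ℝ → ℝ × ℝ,
        (∀ n, (ys n, as n) ∈ Gamma ν S t T (xs n)) ∧
        TendstoUniformlyOn ys y atTop (Icc t T) ∧
        Tendsto (fun n => (∫ τ in t..T, sq2 (as n τ)) - ∫ τ in t..T, sq2 (α τ))
          atTop (𝓝 0) ∧
        Tendsto (fun n => cost l g t T (ys n) (as n)) atTop (𝓝 (cost l g t T y α))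

/-- The point `x` is unreachable: no admissible trajectory with finite cost,
starting from another point of `S`, reaches `x` at time `T`. -/
def Unreachable (ν : ℝ) (S : Set (ℝ × ℝ)) (T : ℝ) (x : ℝ × ℝ) : Prop :=
  ∀ xb ∈ S \ {x}, ¬ ∃ p ∈ Gamma ν S 0 T xb, p.1 T = x

/-- Reachability property of the dynamics at `x`. -/
def ReachProperty (ν : ℝ) (S : Set (ℝ × ℝ)) (T : ℝ) (x : ℝ × ℝ) : Prop :=
  ∀ xs : ℕ → ℝ × ℝ, (∀ n, xs n ∈ S) → Tendsto xs atTop (𝓝 x) →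
    ∃ (δ : ℕ → ℝ) (ys as : ℕ → ℝ → ℝ × ℝ),
      (∀ n, δ n ∈ Icc 0 T) ∧
      (∀ n, Admissible ν S 0 (δ n) (xs n) (ys n) (as n) ∧ InL2 (as n) 0 (δ n) ∧
        ys n (δ n) = x) ∧
      Tendsto (fun n => ∫ τ in (0:ℝ)..(δ n), sq2 (as n τ)) atTop (𝓝 0) ∧
      Tendsto δ atTop (𝓝 0)

/-- `x₁`-convexity of a subset of the plane. -/
def X1Convex (A : Set (ℝ × ℝ)) : Prop :=
  ∀ a b h : ℝ, (a, b) ∈ A → 0 < h → (a + h, b) ∈ A →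
    ∀ t ∈ Icc (0:ℝ) 1, (a + t * h, b) ∈ A

/-- Hypothesis (H1). -/
def HypH1 (S : Set (ℝ × ℝ)) : Prop :=
  ∀ x0 ∈ frontier S, x0.1 ≠ 0 →
    ∃ R > 0, X1Convex (S ∩ Metric.ball x0 R) ∧
      ((S ∩ Metric.ball x0 R ∩ {p | x0.2 < p.2}).Nonempty →
        ∃ C > 0,
          {p : ℝ × ℝ | p.1 = x0.1 ∧ p.2 ∈ Ioc x0.2 (x0.2 + R)} ⊆ S ∨
          {p : ℝ × ℝ | p.1 ∈ Ioc x0.1 (x0.1 + R) ∧ p.2 = x0.2 + C * (p.1 - x0.1)} ⊆ S ∨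
          {p : ℝ × ℝ | p.1 ∈ Ico (x0.1 - R) x0.1 ∧ p.2 = x0.2 + C * (x0.1 - p.1)} ⊆ S) ∧
      ((S ∩ Metric.ball x0 R ∩ {p | p.2 < x0.2}).Nonempty →
        ∃ C > 0,
          {p : ℝ × ℝ | p.1 = x0.1 ∧ p.2 ∈ Ico (x0.2 - R) x0.2} ⊆ S ∨
          {p : ℝ × ℝ | p.1 ∈ Ioc x0.1 (x0.1 + R) ∧ p.2 = x0.2 - C * (p.1 - x0.1)} ⊆ S ∨
          {p : ℝ × ℝ | p.1 ∈ Ico (x0.1 - R) x0.1 ∧ p.2 = x0.2 - C * (x0.1 - p.1)} ⊆ S)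

/-- Hypothesis (H2). -/
def HypH2 (ν : ℝ) (S : Set (ℝ × ℝ)) : Prop :=
  ∀ x0 ∈ frontier S, x0.1 = 0 →
    ∃ R > 0, X1Convex (S ∩ Metric.ball x0 R) ∧
      ((S ∩ Metric.ball x0 R ∩ {p | x0.2 < p.2}).Nonempty →
        ∃ C > 0,
          {p : ℝ × ℝ | p.1 ∈ Ioc 0 R ∧ p.2 = x0.2 + C * p.1 ^ (ν + 1)} ⊆ S ∨
          {p : ℝ × ℝ | p.1 ∈ Ico (-R) 0 ∧ p.2 = x0.2 + C * (-p.1) ^ (ν + 1)} ⊆ S) ∧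
      ((S ∩ Metric.ball x0 R ∩ {p | p.2 < x0.2}).Nonempty →
        ∃ C > 0,
          {p : ℝ × ℝ | p.1 ∈ Ioc 0 R ∧ p.2 = x0.2 - C * p.1 ^ (ν + 1)} ⊆ S ∨
          {p : ℝ × ℝ | p.1 ∈ Ico (-R) 0 ∧ p.2 = x0.2 - C * (-p.1) ^ (ν + 1)} ⊆ S)

namespace GrAux

lemma ae_restrict_of_forall {f g : ℝ → ℝ} {s : Set ℝ} (hs : MeasurableSet s)
    (h : ∀ x ∈ s, f x = g x) : f =ᵐ[volume.restrict s] g :=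
  (ae_restrict_iff' hs).2 (Filter.Eventually.of_forall h)

lemma mem_uIoc_le {u v m τ : ℝ} (hu : u ≤ m) (hv : v ≤ m) (hτ : τ ∈ uIoc u v) : τ ≤ m :=
  le_trans hτ.2 (max_le hu hv)

lemma mem_uIoc_gt {u v m τ : ℝ} (hu : m ≤ u) (hv : m ≤ v) (hτ : τ ∈ uIoc u v) : ¬ τ ≤ m :=
  not_le.2 (lt_of_le_of_lt (le_min hu hv) hτ.1)

lemma glue {ν : ℝ} {S : Set (ℝ × ℝ)} {t m T : ℝ} {x : ℝ × ℝ}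
    {y₁ α₁ y₂ α₂ : ℝ → ℝ × ℝ}
    (htm : t ≤ m) (hmT : m ≤ T)
    (h1 : Admissible ν S t m x y₁ α₁)
    (h2 : Admissible ν S m T (y₁ m) y₂ α₂)
    (hy : y₂ m = y₁ m) :
    Admissible ν S t T x (fun s => if s ≤ m then y₁ s else y₂ s)
      (fun s => if s ≤ m then α₁ s else α₂ s) := by
  obtain ⟨m1, i11, i12, e11, e12, mem1⟩ := h1
  obtain ⟨m2, i21, i22, e21, e22, mem2⟩ := h2
  set Y : ℝ → ℝ × ℝ := fun s => if s ≤ m then y₁ s else y₂ s with hYdef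
  set A : ℝ → ℝ × ℝ := fun s => if s ≤ m then α₁ s else α₂ s with hAdef
  have hYle : ∀ s : ℝ, s ≤ m → Y s = y₁ s := fun s hs => if_pos hs
  have hYgt : ∀ s : ℝ, ¬ s ≤ m → Y s = y₂ s := fun s hs => if_neg hs
  have hAle : ∀ s : ℝ, s ≤ m → A s = α₁ s := fun s hs => if_pos hs
  have hAgt : ∀ s : ℝ, ¬ s ≤ m → A s = α₂ s := fun s hs => if_neg hs
  -- integrability of first components
  have iA1l : ∀ u v : ℝ, u ≤ m → v ≤ m → (fun τ => (A τ).1) =ᵐ[volume.restrict (uIoc u v)]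
      (fun τ => (α₁ τ).1) := fun u v hu hv =>
    ae_restrict_of_forall measurableSet_uIoc
      (fun τ hτ => by rw [hAle τ (mem_uIoc_le hu hv hτ)])
  have iA1r : ∀ u v : ℝ, m ≤ u → m ≤ v → (fun τ => (A τ).1) =ᵐ[volume.restrict (uIoc u v)]
      (fun τ => (α₂ τ).1) := fun u v hu hv =>
    ae_restrict_of_forall measurableSet_uIoc
      (fun τ hτ => by rw [hAgt τ (mem_uIoc_gt hu hv hτ)])
  have iA2l : ∀ u v : ℝ, u ≤ m → v ≤ m →
      (fun τ => |(Y τ).1| ^ ν * (A τ).2) =ᵐ[volume.restrict (uIoc u v)]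
      (fun τ => |(y₁ τ).1| ^ ν * (α₁ τ).2) := fun u v hu hv =>
    ae_restrict_of_forall measurableSet_uIoc
      (fun τ hτ => by rw [hAle τ (mem_uIoc_le hu hv hτ), hYle τ (mem_uIoc_le hu hv hτ)])
  have iA2r : ∀ u v : ℝ, m ≤ u → m ≤ v →
      (fun τ => |(Y τ).1| ^ ν * (A τ).2) =ᵐ[volume.restrict (uIoc u v)]
      (fun τ => |(y₂ τ).1| ^ ν * (α₂ τ).2) := fun u v hu hv =>
    ae_restrict_of_forall measurableSet_uIoc
      (fun τ hτ => by rw [hAgt τ (mem_uIoc_gt hu hv hτ), hYgt τ (mem_uIoc_gt hu hv hτ)])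
  have intA1l : ∀ s : ℝ, t ≤ s → s ≤ m → IntervalIntegrable (fun τ => (A τ).1) volume t s :=
    fun s hts hsm => ((i11.mono_set (uIcc_subset_uIcc (left_mem_uIcc)
      (mem_uIcc_of_le hts hsm))).congr_ae ((iA1l t s htm hsm).symm))
  have intA1r : ∀ s : ℝ, m ≤ s → s ≤ T → IntervalIntegrable (fun τ => (A τ).1) volume m s :=
    fun s hms hsT => ((i21.mono_set (uIcc_subset_uIcc (left_mem_uIcc)
      (mem_uIcc_of_le hms hsT))).congr_ae ((iA1r m s le_rfl hms).symm))
  have intA2l : ∀ s : ℝ, t ≤ s → s ≤ m →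
      IntervalIntegrable (fun τ => |(Y τ).1| ^ ν * (A τ).2) volume t s :=
    fun s hts hsm => ((i12.mono_set (uIcc_subset_uIcc (left_mem_uIcc)
      (mem_uIcc_of_le hts hsm))).congr_ae ((iA2l t s htm hsm).symm))
  have intA2r : ∀ s : ℝ, m ≤ s → s ≤ T →
      IntervalIntegrable (fun τ => |(Y τ).1| ^ ν * (A τ).2) volume m s :=
    fun s hms hsT => ((i22.mono_set (uIcc_subset_uIcc (left_mem_uIcc)
      (mem_uIcc_of_le hms hsT))).congr_ae ((iA2r m s le_rfl hms).symm))
  have key1l : ∀ s : ℝ, t ≤ s → s ≤ m →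
      (∫ τ in t..s, (A τ).1) = ∫ τ in t..s, (α₁ τ).1 := fun s hts hsm =>
    intervalIntegral.integral_congr_ae
      (Filter.Eventually.of_forall (fun τ hτ => by rw [hAle τ (mem_uIoc_le htm hsm hτ)]))
  have key1r : ∀ s : ℝ, m ≤ s →
      (∫ τ in m..s, (A τ).1) = ∫ τ in m..s, (α₂ τ).1 := fun s hms =>
    intervalIntegral.integral_congr_ae
      (Filter.Eventually.of_forall (fun τ hτ => by rw [hAgt τ (mem_uIoc_gt le_rfl hms hτ)]))
  have key2l : ∀ s : ℝ, t ≤ s → s ≤ m →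
      (∫ τ in t..s, |(Y τ).1| ^ ν * (A τ).2) = ∫ τ in t..s, |(y₁ τ).1| ^ ν * (α₁ τ).2 :=
    fun s hts hsm => intervalIntegral.integral_congr_ae
      (Filter.Eventually.of_forall (fun τ hτ => by
        rw [hAle τ (mem_uIoc_le htm hsm hτ), hYle τ (mem_uIoc_le htm hsm hτ)]))
  have key2r : ∀ s : ℝ, m ≤ s →
      (∫ τ in m..s, |(Y τ).1| ^ ν * (A τ).2) = ∫ τ in m..s, |(y₂ τ).1| ^ ν * (α₂ τ).2 :=
    fun s hms => intervalIntegral.integral_congr_ae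
      (Filter.Eventually.of_forall (fun τ hτ => by
        rw [hAgt τ (mem_uIoc_gt le_rfl hms hτ), hYgt τ (mem_uIoc_gt le_rfl hms hτ)]))
  refine ⟨Measurable.ite measurableSet_Iic m1 m2, (intA1l m htm le_rfl).trans (intA1r T hmT le_rfl),
    (intA2l m htm le_rfl).trans (intA2r T hmT le_rfl), ?_, ?_, ?_⟩
  · intro s hs
    by_cases hsm : s ≤ m
    · rw [hYle s hsm, key1l s hs.1 hsm]; exact e11 s ⟨hs.1, hsm⟩
    · have hms : m ≤ s := le_of_not_ge hsm
      rw [hYgt s hsm]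
      rw [← intervalIntegral.integral_add_adjacent_intervals (intA1l m htm le_rfl)
        (intA1r s hms hs.2), key1l m htm le_rfl, key1r s hms]
      rw [e21 s ⟨hms, hs.2⟩, e11 m ⟨htm, le_rfl⟩]
      ring
  · intro s hs
    by_cases hsm : s ≤ m
    · rw [hYle s hsm, key2l s hs.1 hsm]; exact e12 s ⟨hs.1, hsm⟩
    · have hms : m ≤ s := le_of_not_ge hsm
      rw [hYgt s hsm]
      rw [← intervalIntegral.integral_add_adjacent_intervals (intA2l m htm le_rfl)
        (intA2r s hms hs.2), key2l m htm le_rfl, key2r s hms]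
      rw [e22 s ⟨hms, hs.2⟩, e12 m ⟨htm, le_rfl⟩]
      ring
  · intro s hs
    by_cases hsm : s ≤ m
    · rw [hYle s hsm]; exact mem1 s ⟨hs.1, hsm⟩
    · rw [hYgt s hsm]; exact mem2 s ⟨le_of_not_ge hsm, hs.2⟩

lemma glue_endval {y₁ y₂ : ℝ → ℝ × ℝ} {m T : ℝ} (hmT : m ≤ T) (hy : y₂ m = y₁ m) :
    (fun s => if s ≤ m then y₁ s else y₂ s) T = y₂ T := by
  by_cases h : T ≤ m
  · have hTm : T = m := le_antisymm h hmT
    subst hTm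
    simp only [if_pos h, hy]
  · simp only [if_neg h]

lemma sq2_bd1 {ν : ℝ} : sq2 (1, 0) ≤ 1 + (ν + 1) ^ 2 := by
  simp only [sq2]
  nlinarith [sq_nonneg (ν + 1)]

lemma sq2_bd2 {ν : ℝ} : sq2 (1, (ν + 1) * 1) ≤ 1 + (ν + 1) ^ 2 := by
  simp only [sq2]
  nlinarith [sq_nonneg (ν + 1)]

lemma sq2_bd3 {ν s : ℝ} (hs : s = 1 ∨ s = -1) : sq2 (0, s) ≤ 1 + (ν + 1) ^ 2 := by
  rcases hs with h | h <;> subst h <;> simp only [sq2] <;> nlinarith [sq_nonneg (ν + 1)]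

lemma sq2_bd4 {ν : ℝ} : sq2 (-1, (ν + 1) * (-1)) ≤ 1 + (ν + 1) ^ 2 := by
  simp only [sq2]
  nlinarith [sq_nonneg (ν + 1)]

lemma sq2_bd5 {ν : ℝ} : sq2 (-1, 0) ≤ 1 + (ν + 1) ^ 2 := by
  simp only [sq2]
  nlinarith [sq_nonneg (ν + 1)]

lemma sqrt_add_le' (x y : ℝ) (hx : 0 ≤ x) (hy : 0 ≤ y) :
    Real.sqrt (x + y) ≤ Real.sqrt x + Real.sqrt y := by
  have hsum : x + y ≤ (Real.sqrt x + Real.sqrt y) ^ 2 := by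
    nlinarith [Real.sqrt_nonneg x, Real.sqrt_nonneg y, Real.sq_sqrt hx, Real.sq_sqrt hy]
  calc Real.sqrt (x + y) ≤ Real.sqrt ((Real.sqrt x + Real.sqrt y) ^ 2) :=
        Real.sqrt_le_sqrt hsum
    _ = Real.sqrt x + Real.sqrt y :=
        Real.sqrt_sq (add_nonneg (Real.sqrt_nonneg _) (Real.sqrt_nonneg _))

lemma sqrt3L_bd {L : ℝ} (hL : 2 ≤ L) : Real.sqrt (3 * L) ≤ 3 * L / 2 := by
  have h2 : (3 * L) ≤ (3 * L / 2) ^ 2 := by nlinarith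
  calc Real.sqrt (3 * L) ≤ Real.sqrt ((3 * L / 2) ^ 2) := Real.sqrt_le_sqrt h2
    _ = 3 * L / 2 := Real.sqrt_sq (by linarith)

lemma sqrt_le_self' {r : ℝ} (h1 : 1 ≤ r) : Real.sqrt r ≤ r := by
  have hr0 : (0:ℝ) ≤ r := by linarith
  have h2 : r ≤ r ^ 2 := by nlinarith
  calc Real.sqrt r ≤ Real.sqrt (r ^ 2) := Real.sqrt_le_sqrt h2
    _ = r := Real.sqrt_sq hr0

lemma legH {ν : ℝ} {S : Set (ℝ × ℝ)} {t T p q σ : ℝ} (htT : t ≤ T)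
    (hS : ∀ s ∈ Icc t T, ((p + σ * (s - t), q) : ℝ × ℝ) ∈ S) :
    Admissible ν S t T (p, q) (fun s => (p + σ * (s - t), q)) (fun _ => (σ, 0)) := by
  refine ⟨measurable_const, ?_, ?_, ?_, ?_, hS⟩
  · exact intervalIntegrable_const
  · have : (fun τ : ℝ => |((fun s : ℝ => ((p + σ * (s - t), q) : ℝ × ℝ)) τ).1| ^ ν *
        (((fun _ : ℝ => ((σ, 0) : ℝ × ℝ)) τ).2)) = fun _ => (0:ℝ) := by
      funext τ; simp
    rw [this]; exact intervalIntegrable_const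
  · intro s hs
    simp only [intervalIntegral.integral_const, smul_eq_mul]
    ring
  · intro s hs
    have : (∫ τ in t..s, |((fun s : ℝ => ((p + σ * (s - t), q) : ℝ × ℝ)) τ).1| ^ ν *
        (((fun _ : ℝ => ((σ, 0) : ℝ × ℝ)) τ).2)) = 0 := by
      simp
    rw [this]; ring

lemma legV {ν : ℝ} {S : Set (ℝ × ℝ)} {t T p q w : ℝ} (htT : t ≤ T) (hp : 0 < p)
    (hS : ∀ s ∈ Icc t T, ((p, q + w * (s - t)) : ℝ × ℝ) ∈ S) :
    Admissible ν S t T (p, q) (fun s => (p, q + w * (s - t)))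
      (fun _ => (0, w / p ^ ν)) := by
  have hpν : (0:ℝ) < p ^ ν := Real.rpow_pos_of_pos hp ν
  have hint : (fun τ : ℝ => |((fun s : ℝ => ((p, q + w * (s - t)) : ℝ × ℝ)) τ).1| ^ ν *
      (((fun _ : ℝ => ((0, w / p ^ ν) : ℝ × ℝ)) τ).2)) = fun _ => w := by
    funext τ
    simp only []
    rw [abs_of_pos hp]
    field_simp
  refine ⟨measurable_const, ?_, ?_, ?_, ?_, hS⟩
  · have : (fun τ : ℝ => (((fun _ : ℝ => ((0, w / p ^ ν) : ℝ × ℝ)) τ).1)) = fun _ => (0:ℝ) := by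
      funext τ; simp
    rw [this]; exact intervalIntegrable_const
  · rw [hint]; exact intervalIntegrable_const
  · intro s hs; simp
  · intro s hs
    rw [hint]
    simp only [intervalIntegral.integral_const, smul_eq_mul]
    ring

lemma legC {ν : ℝ} (hν : 0 < ν) {S : Set (ℝ × ℝ)} {t T p q σ : ℝ} (htT : t ≤ T)
    (hpos : ∀ s ∈ Icc t T, 0 ≤ p + σ * (s - t))
    (hS : ∀ s ∈ Icc t T,
      ((p + σ * (s - t), q + (p + σ * (s - t)) ^ (ν+1) - p ^ (ν+1)) : ℝ × ℝ) ∈ S) :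
    Admissible ν S t T (p, q)
      (fun s => (p + σ * (s - t), q + (p + σ * (s - t)) ^ (ν+1) - p ^ (ν+1)))
      (fun _ => (σ, (ν+1) * σ)) := by
  have hcont : Continuous fun τ : ℝ => |p + σ * (τ - t)| ^ ν := by
    refine continuous_iff_continuousAt.2 fun x => ?_
    exact (Real.continuousAt_rpow_const _ _ (Or.inr hν.le)).comp
      ((continuous_const.add (continuous_const.mul (continuous_id.sub continuous_const))).abs.continuousAt)
  have hcont' : Continuous fun τ : ℝ => (p + σ * (τ - t)) ^ ν := by
    refine continuous_iff_continuousAt.2 fun x => ?_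
    exact (Real.continuousAt_rpow_const _ _ (Or.inr hν.le)).comp
      ((continuous_const.add (continuous_const.mul (continuous_id.sub continuous_const))).continuousAt)
  have hderiv : ∀ u : ℝ, HasDerivAt (fun u : ℝ => (p + σ * (u - t)) ^ (ν+1))
      (σ * (ν+1) * (p + σ * (u - t)) ^ ν) u := by
    intro u
    have h0 : HasDerivAt (fun u : ℝ => p + σ * (u - t)) σ u := by
      simpa using (((hasDerivAt_id u).sub_const t).const_mul σ).const_add p
    have := h0.rpow_const (p := ν + 1) (Or.inr (by linarith))
    simpa [add_sub_cancel_right] using this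
  refine ⟨measurable_const, ?_, ?_, ?_, ?_, hS⟩
  · exact intervalIntegrable_const
  · exact (hcont.mul continuous_const).intervalIntegrable t T
  · intro s hs
    simp only [intervalIntegral.integral_const, smul_eq_mul]
    ring
  · intro s hs
    have habs : ∀ τ ∈ uIcc t s, |p + σ * (τ - t)| ^ ν * ((ν+1) * σ)
        = σ * (ν+1) * (p + σ * (τ - t)) ^ ν := by
      intro τ hτ
      rw [uIcc_of_le hs.1] at hτ
      rw [abs_of_nonneg (hpos τ ⟨hτ.1, hτ.2.trans hs.2⟩)]
      ring
    have hftc : (∫ τ in t..s, σ * (ν+1) * (p + σ * (τ - t)) ^ ν)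
        = (p + σ * (s - t)) ^ (ν+1) - (p + σ * (t - t)) ^ (ν+1) :=
      intervalIntegral.integral_eq_sub_of_hasDerivAt (fun u _ => hderiv u)
        ((continuous_const.mul hcont').intervalIntegrable t s)
    have hcs : (∫ τ in t..s, |p + σ * (τ - t)| ^ ν * ((ν+1) * σ))
        = (p + σ * (s - t)) ^ (ν+1) - p ^ (ν+1) := by
      rw [intervalIntegral.integral_congr habs, hftc]
      norm_num
    simp only []
    rw [hcs]
    ring

lemma key {ν : ℝ} (hν : 0 < ν) {S : Set (ℝ × ℝ)}
    (hSc : ∀ p : ℝ × ℝ, p ∈ S ↔ 0 ≤ p.1 ∧ p.1 ≤ 1 ∧ p.1 ^ (ν + 1) ≤ p.2 ∧ p.2 ≤ 1)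
    {r : ℝ} (hr : 0 < r) (z₁ z₂ : ℝ × ℝ)
    (h1 : z₁ ∈ S) (h2 : z₂ ∈ S)
    (hdist1 : |z₁.1 - z₂.1| ≤ r) (hdist2 : |z₁.2 - z₂.2| ≤ r) :
    ∃ δ y α, 0 ≤ δ ∧ δ ≤ 3 * (r + (min r 1) ^ (ν + 1)⁻¹) ∧
      Admissible ν S 0 δ z₁ y α ∧
      IntervalIntegrable (fun τ => sq2 (α τ)) volume 0 δ ∧ y δ = z₂ ∧
      (∫ τ in (0:ℝ)..δ, sq2 (α τ)) ≤ (1 + (ν + 1) ^ 2) * δ := by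
  obtain ⟨a, b⟩ := z₁
  obtain ⟨c, d⟩ := z₂
  obtain ⟨ha0, ha1, hab, hb1⟩ := (hSc _).1 h1
  obtain ⟨hc0, hc1, hcd, hdd1⟩ := (hSc _).1 h2
  have had : |a - c| ≤ r := hdist1
  have hbd : |b - d| ≤ r := hdist2
  have hν1 : (0:ℝ) < ν + 1 := by linarith
  have hνne : (ν + 1 : ℝ) ≠ 0 := hν1.ne'
  have hb0 : 0 ≤ b := le_trans (Real.rpow_nonneg ha0 _) hab
  have hd0 : 0 ≤ d := le_trans (Real.rpow_nonneg hc0 _) hcd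
  set m' := min r 1 with hm'def
  have hm0 : 0 < m' := lt_min hr one_pos
  have hm1 : m' ≤ 1 := min_le_right _ _
  set ρ := m' ^ (ν + 1)⁻¹ with hρdef
  have hρ0 : 0 < ρ := Real.rpow_pos_of_pos hm0 _
  have hρ1 : ρ ≤ 1 := Real.rpow_le_one hm0.le hm1 (by positivity)
  set P := max (max a c) ρ with hPdef
  have hρP : ρ ≤ P := le_max_right _ _
  have hP0 : 0 < P := lt_of_lt_of_le hρ0 hρP
  have hPa : a ≤ P := le_trans (le_max_left a c) (le_max_left _ _)
  have hPc : c ≤ P := le_trans (le_max_right a c) (le_max_left _ _)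
  have hP1 : P ≤ 1 := max_le (max_le ha1 hc1) hρ1
  have hgP1 : P ^ (ν + 1) ≤ 1 := Real.rpow_le_one hP0.le hP1 hν1.le
  set q₁ := min P (b ^ (ν + 1)⁻¹) with hq₁def
  set q₂ := min P (d ^ (ν + 1)⁻¹) with hq₂def
  have hbinv : a ≤ b ^ (ν + 1)⁻¹ := by
    calc a = (a ^ (ν + 1)) ^ (ν + 1)⁻¹ := (Real.rpow_rpow_inv ha0 hνne).symm
      _ ≤ _ := Real.rpow_le_rpow (Real.rpow_nonneg ha0 _) hab (by positivity)
  have hdinv : c ≤ d ^ (ν + 1)⁻¹ := by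
    calc c = (c ^ (ν + 1)) ^ (ν + 1)⁻¹ := (Real.rpow_rpow_inv hc0 hνne).symm
      _ ≤ _ := Real.rpow_le_rpow (Real.rpow_nonneg hc0 _) hcd (by positivity)
  have haq₁ : a ≤ q₁ := le_min hPa hbinv
  have hcq₂ : c ≤ q₂ := le_min hPc hdinv
  have hq₁P : q₁ ≤ P := min_le_left _ _
  have hq₂P : q₂ ≤ P := min_le_left _ _
  have hq₁0 : 0 ≤ q₁ := ha0.trans haq₁
  have hq₂0 : 0 ≤ q₂ := hc0.trans hcq₂
  have hgq₁b : q₁ ^ (ν + 1) ≤ b := by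
    calc q₁ ^ (ν + 1) ≤ (b ^ (ν + 1)⁻¹) ^ (ν + 1) :=
          Real.rpow_le_rpow hq₁0 (min_le_right _ _) hν1.le
      _ = b := Real.rpow_inv_rpow hb0 hνne
  have hgq₂d : q₂ ^ (ν + 1) ≤ d := by
    calc q₂ ^ (ν + 1) ≤ (d ^ (ν + 1)⁻¹) ^ (ν + 1) :=
          Real.rpow_le_rpow hq₂0 (min_le_right _ _) hν1.le
      _ = d := Real.rpow_inv_rpow hd0 hνne
  set h₁v := b + P ^ (ν + 1) - q₁ ^ (ν + 1) with hh₁def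
  set h₂v := d + P ^ (ν + 1) - q₂ ^ (ν + 1) with hh₂def
  have hmax1 : h₁v = max b (P ^ (ν + 1)) := by
    rcases le_total P (b ^ (ν + 1)⁻¹) with h | h
    · have hq : q₁ = P := min_eq_left h
      have hle : P ^ (ν + 1) ≤ b := by
        calc P ^ (ν + 1) ≤ (b ^ (ν + 1)⁻¹) ^ (ν + 1) := Real.rpow_le_rpow hP0.le h hν1.le
          _ = b := Real.rpow_inv_rpow hb0 hνne
      rw [hh₁def, hq, max_eq_left hle]; ring
    · have hq : q₁ = b ^ (ν + 1)⁻¹ := min_eq_right h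
      have hle : b ≤ P ^ (ν + 1) := by
        calc b = (b ^ (ν + 1)⁻¹) ^ (ν + 1) := (Real.rpow_inv_rpow hb0 hνne).symm
          _ ≤ P ^ (ν + 1) := Real.rpow_le_rpow (Real.rpow_nonneg hb0 _) h hν1.le
      rw [hh₁def, hq, Real.rpow_inv_rpow hb0 hνne, max_eq_right hle]; ring
  have hmax2 : h₂v = max d (P ^ (ν + 1)) := by
    rcases le_total P (d ^ (ν + 1)⁻¹) with h | h
    · have hq : q₂ = P := min_eq_left h
      have hle : P ^ (ν + 1) ≤ d := by
        calc P ^ (ν + 1) ≤ (d ^ (ν + 1)⁻¹) ^ (ν + 1) := Real.rpow_le_rpow hP0.le h hν1.le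
          _ = d := Real.rpow_inv_rpow hd0 hνne
      rw [hh₂def, hq, max_eq_left hle]; ring
    · have hq : q₂ = d ^ (ν + 1)⁻¹ := min_eq_right h
      have hle : d ≤ P ^ (ν + 1) := by
        calc d = (d ^ (ν + 1)⁻¹) ^ (ν + 1) := (Real.rpow_inv_rpow hd0 hνne).symm
          _ ≤ P ^ (ν + 1) := Real.rpow_le_rpow (Real.rpow_nonneg hd0 _) h hν1.le
      rw [hh₂def, hq, Real.rpow_inv_rpow hd0 hνne, max_eq_right hle]; ring
  have hgPh₁ : P ^ (ν + 1) ≤ h₁v := hmax1 ▸ le_max_right _ _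
  have hgPh₂ : P ^ (ν + 1) ≤ h₂v := hmax2 ▸ le_max_right _ _
  have hh₁1 : h₁v ≤ 1 := hmax1 ▸ max_le hb1 hgP1
  have hh₂1 : h₂v ≤ 1 := hmax2 ▸ max_le hdd1 hgP1
  have hPν0 : (0:ℝ) < P ^ ν := Real.rpow_pos_of_pos hP0 ν
  set sgn := if h₁v ≤ h₂v then (1:ℝ) else -1 with hsgndef
  set w := sgn * P ^ ν with hwdef
  set Tv := |h₂v - h₁v| / P ^ ν with hTvdef
  have hTv0 : 0 ≤ Tv := div_nonneg (abs_nonneg _) hPν0.le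
  have hwT : h₁v + w * Tv = h₂v := by
    rw [hwdef, hTvdef, hsgndef]
    by_cases hcs : h₁v ≤ h₂v
    · rw [if_pos hcs, abs_of_nonneg (sub_nonneg.2 hcs)]
      field_simp
      ring
    · rw [if_neg hcs, abs_of_nonpos (sub_nonpos.2 (le_of_not_ge hcs))]
      field_simp
      ring
  have hvert : ∀ u : ℝ, 0 ≤ u → u ≤ Tv →
      P ^ (ν + 1) ≤ h₁v + w * u ∧ h₁v + w * u ≤ 1 := by
    intro u hu0 huT
    by_cases hcs : h₁v ≤ h₂v
    · have hw' : w = P ^ ν := by rw [hwdef, hsgndef, if_pos hcs, one_mul]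
      have h1' : 0 ≤ w * u := by rw [hw']; exact mul_nonneg hPν0.le hu0
      have h2' : w * u ≤ h₂v - h₁v := by
        have hq : w * Tv = h₂v - h₁v := by linarith [hwT]
        have : w * u ≤ w * Tv := by
          rw [hw']; exact mul_le_mul_of_nonneg_left huT hPν0.le
        linarith
      exact ⟨by linarith, by linarith⟩
    · have hcs' : h₂v ≤ h₁v := le_of_not_ge hcs
      have hw' : w = -(P ^ ν) := by rw [hwdef, hsgndef, if_neg hcs]; ring
      have h1' : w * u ≤ 0 := by
        rw [hw']
        have := mul_nonneg hPν0.le hu0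
        linarith
      have h2' : h₂v - h₁v ≤ w * u := by
        have hq : w * Tv = h₂v - h₁v := by linarith [hwT]
        have : w * Tv ≤ w * u := by
          rw [hw']
          have := mul_le_mul_of_nonneg_left huT hPν0.le
          linarith
        linarith
      exact ⟨by linarith, by linarith⟩
  set t1 := q₁ - a with ht1def
  set t2 := t1 + (P - q₁) with ht2def
  set t3 := t2 + Tv with ht3def
  set t4 := t3 + (P - q₂) with ht4def
  set t5 := t4 + (q₂ - c) with ht5def
  have h01 : (0:ℝ) ≤ t1 := by rw [ht1def]; linarith
  have h12 : t1 ≤ t2 := by rw [ht2def]; linarith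
  have h23 : t2 ≤ t3 := by rw [ht3def]; linarith
  have h34 : t3 ≤ t4 := by rw [ht4def]; linarith
  have h45 : t4 ≤ t5 := by rw [ht5def]; linarith
  have h02 : (0:ℝ) ≤ t2 := h01.trans h12
  have h03 : (0:ℝ) ≤ t3 := h02.trans h23
  have h04 : (0:ℝ) ≤ t4 := h03.trans h34
  have h05 : (0:ℝ) ≤ t5 := h04.trans h45
  -- legs
  have L1 : Admissible ν S 0 t1 (a, b) (fun s => (a + 1 * (s - 0), b)) (fun _ => (1, 0)) := by
    refine legH h01 ?_
    intro s hs
    have hx0 : 0 ≤ a + 1 * (s - 0) := by linarith [hs.1]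
    have hxq : a + 1 * (s - 0) ≤ q₁ := by
      have := hs.2; rw [ht1def] at this; linarith
    have hx1 : a + 1 * (s - 0) ≤ 1 := by linarith [hq₁P, hP1]
    have hgb : (a + 1 * (s - 0)) ^ (ν + 1) ≤ b := by
      calc (a + 1 * (s - 0)) ^ (ν + 1) ≤ q₁ ^ (ν + 1) := Real.rpow_le_rpow hx0 hxq hν1.le
        _ ≤ b := hgq₁b
    exact (hSc _).2 ⟨hx0, hx1, hgb, hb1⟩
  have L2 : Admissible ν S t1 t2 (q₁, b)
      (fun s => (q₁ + 1 * (s - t1), b + (q₁ + 1 * (s - t1)) ^ (ν + 1) - q₁ ^ (ν + 1)))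
      (fun _ => (1, (ν + 1) * 1)) := by
    refine legC hν h12 ?_ ?_
    · intro s hs; linarith [hs.1]
    · intro s hs
      have hx0 : 0 ≤ q₁ + 1 * (s - t1) := by linarith [hs.1]
      have hxP : q₁ + 1 * (s - t1) ≤ P := by
        have := hs.2; rw [ht2def] at this; linarith
      have hgx : (q₁ + 1 * (s - t1)) ^ (ν + 1) ≤ P ^ (ν + 1) :=
        Real.rpow_le_rpow hx0 hxP hν1.le
      have hy1 : (q₁ + 1 * (s - t1)) ^ (ν + 1) ≤
          b + (q₁ + 1 * (s - t1)) ^ (ν + 1) - q₁ ^ (ν + 1) := by linarith [hgq₁b]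
      have hy2 : b + (q₁ + 1 * (s - t1)) ^ (ν + 1) - q₁ ^ (ν + 1) ≤ 1 := by
        have := hh₁1; rw [hh₁def] at this; linarith
      exact (hSc _).2 ⟨hx0, le_trans hxP hP1, hy1, hy2⟩
  have L3 : Admissible ν S t2 t3 (P, h₁v) (fun s => (P, h₁v + w * (s - t2)))
      (fun _ => (0, w / P ^ ν)) := by
    refine legV h23 hP0 ?_
    intro s hs
    have hu := hvert (s - t2) (by linarith [hs.1]) (by
      have := hs.2; rw [ht3def] at this; linarith)
    exact (hSc _).2 ⟨hP0.le, hP1, hu.1, hu.2⟩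
  have L4 : Admissible ν S t3 t4 (P, h₂v)
      (fun s => (P + (-1) * (s - t3), h₂v + (P + (-1) * (s - t3)) ^ (ν + 1) - P ^ (ν + 1)))
      (fun _ => (-1, (ν + 1) * (-1))) := by
    refine legC hν h34 ?_ ?_
    · intro s hs
      have := hs.2; rw [ht4def] at this; linarith [hq₂0]
    · intro s hs
      have hxq : q₂ ≤ P + (-1) * (s - t3) := by
        have := hs.2; rw [ht4def] at this; linarith
      have hxP : P + (-1) * (s - t3) ≤ P := by linarith [hs.1]
      have hx0 : 0 ≤ P + (-1) * (s - t3) := le_trans hq₂0 hxq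
      have hgx : (P + (-1) * (s - t3)) ^ (ν + 1) ≤ P ^ (ν + 1) :=
        Real.rpow_le_rpow hx0 hxP hν1.le
      have hy1 : (P + (-1) * (s - t3)) ^ (ν + 1) ≤
          h₂v + (P + (-1) * (s - t3)) ^ (ν + 1) - P ^ (ν + 1) := by
        have := hgPh₂; linarith
      have hy2 : h₂v + (P + (-1) * (s - t3)) ^ (ν + 1) - P ^ (ν + 1) ≤ 1 := by
        have := hh₂1; linarith
      exact (hSc _).2 ⟨hx0, le_trans hxP hP1, hy1, hy2⟩
  have L5 : Admissible ν S t4 t5 (q₂, d) (fun s => (q₂ + (-1) * (s - t4), d))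
      (fun _ => (-1, 0)) := by
    refine legH h45 ?_
    intro s hs
    have hxc : c ≤ q₂ + (-1) * (s - t4) := by
      have := hs.2; rw [ht5def] at this; linarith
    have hxq : q₂ + (-1) * (s - t4) ≤ q₂ := by linarith [hs.1]
    have hx0 : 0 ≤ q₂ + (-1) * (s - t4) := le_trans hc0 hxc
    have hx1 : q₂ + (-1) * (s - t4) ≤ 1 := by linarith [hq₂P, hP1]
    have hgb : (q₂ + (-1) * (s - t4)) ^ (ν + 1) ≤ d := by
      calc (q₂ + (-1) * (s - t4)) ^ (ν + 1) ≤ q₂ ^ (ν + 1) :=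
            Real.rpow_le_rpow hx0 hxq hν1.le
        _ ≤ d := hgq₂d
    exact (hSc _).2 ⟨hx0, hx1, hgb, hdd1⟩
  -- glue the legs
  have e1t : (fun s : ℝ => ((a + 1 * (s - 0), b) : ℝ × ℝ)) t1 = ((q₁ : ℝ), b) := by
    show ((a + 1 * (t1 - 0), b) : ℝ × ℝ) = (q₁, b)
    rw [show a + 1 * (t1 - 0) = q₁ by rw [ht1def]; ring]
  rw [← e1t] at L2
  have hy2 : (fun s : ℝ => ((q₁ + 1 * (s - t1), b + (q₁ + 1 * (s - t1)) ^ (ν + 1) - q₁ ^ (ν + 1)) : ℝ × ℝ)) t1 = (fun s : ℝ => ((a + 1 * (s - 0), b) : ℝ × ℝ)) t1 := by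
    rw [e1t]
    show ((q₁ + 1 * (t1 - t1), b + (q₁ + 1 * (t1 - t1)) ^ (ν + 1) - q₁ ^ (ν + 1)) : ℝ × ℝ) = (q₁, b)
    rw [show q₁ + 1 * (t1 - t1) = q₁ by ring]
    rw [show b + q₁ ^ (ν + 1) - q₁ ^ (ν + 1) = b by ring]
  have G2 : Admissible ν S 0 t2 (a, b) (fun s : ℝ => if s ≤ t1 then (fun s : ℝ => ((a + 1 * (s - 0), b) : ℝ × ℝ)) s else (fun s : ℝ => ((q₁ + 1 * (s - t1), b + (q₁ + 1 * (s - t1)) ^ (ν + 1) - q₁ ^ (ν + 1)) : ℝ × ℝ)) s) (fun s : ℝ => if s ≤ t1 then (fun _ : ℝ => ((1 : ℝ), (0 : ℝ))) s else (fun _ : ℝ => ((1 : ℝ), (ν + 1) * 1)) s) := glue h01 h12 L1 L2 hy2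
  have ev2 : (fun s : ℝ => if s ≤ t1 then (fun s : ℝ => ((a + 1 * (s - 0), b) : ℝ × ℝ)) s else (fun s : ℝ => ((q₁ + 1 * (s - t1), b + (q₁ + 1 * (s - t1)) ^ (ν + 1) - q₁ ^ (ν + 1)) : ℝ × ℝ)) s) t2 = ((P : ℝ), h₁v) := by
    rw [glue_endval (y₁ := (fun s : ℝ => ((a + 1 * (s - 0), b) : ℝ × ℝ))) (y₂ := (fun s : ℝ => ((q₁ + 1 * (s - t1), b + (q₁ + 1 * (s - t1)) ^ (ν + 1) - q₁ ^ (ν + 1)) : ℝ × ℝ))) h12 hy2]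
    show ((q₁ + 1 * (t2 - t1), b + (q₁ + 1 * (t2 - t1)) ^ (ν + 1) - q₁ ^ (ν + 1)) : ℝ × ℝ) = (P, h₁v)
    rw [show q₁ + 1 * (t2 - t1) = P by rw [ht2def]; ring, hh₁def]
  rw [← ev2] at L3
  have hy3 : (fun s : ℝ => ((P, h₁v + w * (s - t2)) : ℝ × ℝ)) t2 = (fun s : ℝ => if s ≤ t1 then (fun s : ℝ => ((a + 1 * (s - 0), b) : ℝ × ℝ)) s else (fun s : ℝ => ((q₁ + 1 * (s - t1), b + (q₁ + 1 * (s - t1)) ^ (ν + 1) - q₁ ^ (ν + 1)) : ℝ × ℝ)) s) t2 := by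
    rw [ev2]
    show ((P, h₁v + w * (t2 - t2)) : ℝ × ℝ) = (P, h₁v)
    rw [show h₁v + w * (t2 - t2) = h₁v by ring]
  have G3 : Admissible ν S 0 t3 (a, b) (fun s : ℝ => if s ≤ t2 then (fun s : ℝ => if s ≤ t1 then (fun s : ℝ => ((a + 1 * (s - 0), b) : ℝ × ℝ)) s else (fun s : ℝ => ((q₁ + 1 * (s - t1), b + (q₁ + 1 * (s - t1)) ^ (ν + 1) - q₁ ^ (ν + 1)) : ℝ × ℝ)) s) s else (fun s : ℝ => ((P, h₁v + w * (s - t2)) : ℝ × ℝ)) s) (fun s : ℝ => if s ≤ t2 then (fun s : ℝ => if s ≤ t1 then (fun _ : ℝ => ((1 : ℝ), (0 : ℝ))) s else (fun _ : ℝ => ((1 : ℝ), (ν + 1) * 1)) s) s else (fun _ : ℝ => ((0 : ℝ), w / P ^ ν)) s) := glue h02 h23 G2 L3 hy3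
  have ev3 : (fun s : ℝ => if s ≤ t2 then (fun s : ℝ => if s ≤ t1 then (fun s : ℝ => ((a + 1 * (s - 0), b) : ℝ × ℝ)) s else (fun s : ℝ => ((q₁ + 1 * (s - t1), b + (q₁ + 1 * (s - t1)) ^ (ν + 1) - q₁ ^ (ν + 1)) : ℝ × ℝ)) s) s else (fun s : ℝ => ((P, h₁v + w * (s - t2)) : ℝ × ℝ)) s) t3 = ((P : ℝ), h₂v) := by
    rw [glue_endval (y₁ := (fun s : ℝ => if s ≤ t1 then (fun s : ℝ => ((a + 1 * (s - 0), b) : ℝ × ℝ)) s else (fun s : ℝ => ((q₁ + 1 * (s - t1), b + (q₁ + 1 * (s - t1)) ^ (ν + 1) - q₁ ^ (ν + 1)) : ℝ × ℝ)) s)) (y₂ := (fun s : ℝ => ((P, h₁v + w * (s - t2)) : ℝ × ℝ))) h23 hy3]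
    show ((P, h₁v + w * (t3 - t2)) : ℝ × ℝ) = (P, h₂v)
    rw [show t3 - t2 = Tv by rw [ht3def]; ring, hwT]
  rw [← ev3] at L4
  have hy4 : (fun s : ℝ => ((P + (-1) * (s - t3), h₂v + (P + (-1) * (s - t3)) ^ (ν + 1) - P ^ (ν + 1)) : ℝ × ℝ)) t3 = (fun s : ℝ => if s ≤ t2 then (fun s : ℝ => if s ≤ t1 then (fun s : ℝ => ((a + 1 * (s - 0), b) : ℝ × ℝ)) s else (fun s : ℝ => ((q₁ + 1 * (s - t1), b + (q₁ + 1 * (s - t1)) ^ (ν + 1) - q₁ ^ (ν + 1)) : ℝ × ℝ)) s) s else (fun s : ℝ => ((P, h₁v + w * (s - t2)) : ℝ × ℝ)) s) t3 := by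
    rw [ev3]
    show ((P + (-1) * (t3 - t3), h₂v + (P + (-1) * (t3 - t3)) ^ (ν + 1) - P ^ (ν + 1)) : ℝ × ℝ) = (P, h₂v)
    rw [show P + (-1) * (t3 - t3) = P by ring]
    rw [show h₂v + P ^ (ν + 1) - P ^ (ν + 1) = h₂v by ring]
  have G4 : Admissible ν S 0 t4 (a, b) (fun s : ℝ => if s ≤ t3 then (fun s : ℝ => if s ≤ t2 then (fun s : ℝ => if s ≤ t1 then (fun s : ℝ => ((a + 1 * (s - 0), b) : ℝ × ℝ)) s else (fun s : ℝ => ((q₁ + 1 * (s - t1), b + (q₁ + 1 * (s - t1)) ^ (ν + 1) - q₁ ^ (ν + 1)) : ℝ × ℝ)) s) s else (fun s : ℝ => ((P, h₁v + w * (s - t2)) : ℝ × ℝ)) s) s else (fun s : ℝ => ((P + (-1) * (s - t3), h₂v + (P + (-1) * (s - t3)) ^ (ν + 1) - P ^ (ν + 1)) : ℝ × ℝ)) s) (fun s : ℝ => if s ≤ t3 then (fun s : ℝ => if s ≤ t2 then (fun s : ℝ => if s ≤ t1 then (fun _ : ℝ => ((1 : ℝ), (0 : ℝ))) s else (fun _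 : ℝ => ((1 : ℝ), (ν + 1) * 1)) s) s else (fun _ : ℝ => ((0 : ℝ), w / P ^ ν)) s) s else (fun _ : ℝ => ((-1 : ℝ), (ν + 1) * (-1))) s) := glue h03 h34 G3 L4 hy4
  have ev4 : (fun s : ℝ => if s ≤ t3 then (fun s : ℝ => if s ≤ t2 then (fun s : ℝ => if s ≤ t1 then (fun s : ℝ => ((a + 1 * (s - 0), b) : ℝ × ℝ)) s else (fun s : ℝ => ((q₁ + 1 * (s - t1), b + (q₁ + 1 * (s - t1)) ^ (ν + 1) - q₁ ^ (ν + 1)) : ℝ × ℝ)) s) s else (fun s : ℝ => ((P, h₁v + w * (s - t2)) : ℝ × ℝ)) s) s else (fun s : ℝ => ((P + (-1) * (s - t3), h₂v + (P + (-1) * (s - t3)) ^ (ν + 1) - P ^ (ν + 1)) : ℝ × ℝ)) s) t4 = ((q₂ : ℝ), d) := by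
    rw [glue_endval (y₁ := (fun s : ℝ => if s ≤ t2 then (fun s : ℝ => if s ≤ t1 then (fun s : ℝ => ((a + 1 * (s - 0), b) : ℝ × ℝ)) s else (fun s : ℝ => ((q₁ + 1 * (s - t1), b + (q₁ + 1 * (s - t1)) ^ (ν + 1) - q₁ ^ (ν + 1)) : ℝ × ℝ)) s) s else (fun s : ℝ => ((P, h₁v + w * (s - t2)) : ℝ × ℝ)) s)) (y₂ := (fun s : ℝ => ((P + (-1) * (s - t3), h₂v + (P + (-1) * (s - t3)) ^ (ν + 1) - P ^ (ν + 1)) : ℝ × ℝ))) h34 hy4]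
    show ((P + (-1) * (t4 - t3), h₂v + (P + (-1) * (t4 - t3)) ^ (ν + 1) - P ^ (ν + 1)) : ℝ × ℝ) = (q₂, d)
    rw [show P + (-1) * (t4 - t3) = q₂ by rw [ht4def]; ring, hh₂def]
    rw [show d + P ^ (ν + 1) - q₂ ^ (ν + 1) + q₂ ^ (ν + 1) - P ^ (ν + 1) = d by ring]
  rw [← ev4] at L5
  have hy5 : (fun s : ℝ => ((q₂ + (-1) * (s - t4), d) : ℝ × ℝ)) t4 = (fun s : ℝ => if s ≤ t3 then (fun s : ℝ => if s ≤ t2 then (fun s : ℝ => if s ≤ t1 then (fun s : ℝ => ((a + 1 * (s - 0), b) : ℝ × ℝ)) s else (fun s : ℝ => ((q₁ + 1 * (s - t1), b + (q₁ + 1 * (s - t1)) ^ (ν + 1) - q₁ ^ (ν + 1)) : ℝ × ℝ)) s) s else (fun s : ℝ => ((P, h₁v + w * (s - t2)) : ℝ × ℝ)) s) s else (fun s : ℝ => ((P + (-1) * (s - t3), h₂v + (P + (-1) * (s - t3)) ^ (ν + 1) - P ^ (ν + 1)) : ℝ × ℝ)) s) t4 := by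
    rw [ev4]
    show ((q₂ + (-1) * (t4 - t4), d) : ℝ × ℝ) = (q₂, d)
    rw [show q₂ + (-1) * (t4 - t4) = q₂ by ring]
  have G5 : Admissible ν S 0 t5 (a, b) (fun s : ℝ => if s ≤ t4 then (fun s : ℝ => if s ≤ t3 then (fun s : ℝ => if s ≤ t2 then (fun s : ℝ => if s ≤ t1 then (fun s : ℝ => ((a + 1 * (s - 0), b) : ℝ × ℝ)) s else (fun s : ℝ => ((q₁ + 1 * (s - t1), b + (q₁ + 1 * (s - t1)) ^ (ν + 1) - q₁ ^ (ν + 1)) : ℝ × ℝ)) s) s else (fun s : ℝ => ((P, h₁v + w * (s - t2)) : ℝ × ℝ)) s) s else (fun s : ℝ => ((P + (-1) * (s - t3), h₂v + (P + (-1) * (s - t3)) ^ (ν + 1) - P ^ (ν + 1)) : ℝ × ℝ)) s) s else (fun s : ℝ => ((q₂ + (-1) * (s - t4), d) : ℝ × ℝ)) s) (fun s : ℝ => if s ≤ t4 then (fun s : ℝ => if s ≤ t3 then (fun s : ℝ => if s ≤ t2 then (fun s : ℝ => if s ≤ t1 then (fun _ : ℝ => ((1 : ℝ), (0 : ℝ)))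 s else (fun _ : ℝ => ((1 : ℝ), (ν + 1) * 1)) s) s else (fun _ : ℝ => ((0 : ℝ), w / P ^ ν)) s) s else (fun _ : ℝ => ((-1 : ℝ), (ν + 1) * (-1))) s) s else (fun _ : ℝ => ((-1 : ℝ), (0 : ℝ))) s) := glue h04 h45 G4 L5 hy5
  have ev5 : (fun s : ℝ => if s ≤ t4 then (fun s : ℝ => if s ≤ t3 then (fun s : ℝ => if s ≤ t2 then (fun s : ℝ => if s ≤ t1 then (fun s : ℝ => ((a + 1 * (s - 0), b) : ℝ × ℝ)) s else (fun s : ℝ => ((q₁ + 1 * (s - t1), b + (q₁ + 1 * (s - t1)) ^ (ν + 1) - q₁ ^ (ν + 1)) : ℝ × ℝ)) s) s else (fun s : ℝ => ((P, h₁v + w * (s - t2)) : ℝ × ℝ)) s) s else (fun s : ℝ => ((P + (-1) * (s - t3), h₂v + (P + (-1) * (s - t3)) ^ (ν + 1) - P ^ (ν + 1)) : ℝ × ℝ)) s) s else (fun s : ℝ => ((q₂ + (-1) * (s - t4), d) : ℝ × ℝ)) s) t5 = ((c : ℝ), d) := by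
    rw [glue_endval (y₁ := (fun s : ℝ => if s ≤ t3 then (fun s : ℝ => if s ≤ t2 then (fun s : ℝ => if s ≤ t1 then (fun s : ℝ => ((a + 1 * (s - 0), b) : ℝ × ℝ)) s else (fun s : ℝ => ((q₁ + 1 * (s - t1), b + (q₁ + 1 * (s - t1)) ^ (ν + 1) - q₁ ^ (ν + 1)) : ℝ × ℝ)) s) s else (fun s : ℝ => ((P, h₁v + w * (s - t2)) : ℝ × ℝ)) s) s else (fun s : ℝ => ((P + (-1) * (s - t3), h₂v + (P + (-1) * (s - t3)) ^ (ν + 1) - P ^ (ν + 1)) : ℝ × ℝ)) s)) (y₂ := (fun s : ℝ => ((q₂ + (-1) * (s - t4), d) : ℝ × ℝ))) h45 hy5]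
    show ((q₂ + (-1) * (t5 - t4), d) : ℝ × ℝ) = (c, d)
    rw [show q₂ + (-1) * (t5 - t4) = c by rw [ht5def]; ring]
  -- time bound
  have ht5eq : t5 = (P - a) + (P - c) + Tv := by
    rw [ht5def, ht4def, ht3def, ht2def, ht1def]; ring
  have hTvb : Tv ≤ r + ρ := by
    have hA : |h₂v - h₁v| ≤ r := by
      rw [hmax1, hmax2]
      calc |d ⊔ P ^ (ν + 1) - b ⊔ P ^ (ν + 1)| ≤ |d - b| := abs_max_sub_max_le_abs d b _
        _ ≤ r := by rw [abs_sub_comm]; exact hbd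
    have hρν0 : (0:ℝ) < ρ ^ ν := Real.rpow_pos_of_pos hρ0 ν
    have hB : |h₂v - h₁v| / P ^ ν ≤ r / ρ ^ ν := by
      gcongr <;> first
        | exact Real.rpow_le_rpow hρ0.le hρP hν.le
        | skip
    have hC : r / ρ ^ ν ≤ r + ρ := by
      by_cases hr1 : r ≤ 1
      · have hmr : m' = r := min_eq_left hr1
        have hρν : ρ ^ ν = r ^ ((ν + 1)⁻¹ * ν) := by
          rw [hρdef, hmr, ← Real.rpow_mul hr.le]
        have h5' : r / ρ ^ ν = r ^ (1 - (ν + 1)⁻¹ * ν) := by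
          rw [hρν, Real.rpow_sub hr, Real.rpow_one]
        have h6' : 1 - (ν + 1)⁻¹ * ν = (ν + 1)⁻¹ := by
          field_simp
          ring
        have h7' : r ^ ((ν + 1)⁻¹) = ρ := by rw [hρdef, hmr]
        rw [h5', h6', h7']
        linarith
      · have hmr : m' = 1 := min_eq_right (le_of_not_ge hr1)
        have hρ1' : ρ = 1 := by rw [hρdef, hmr, Real.one_rpow]
        rw [hρ1', Real.one_rpow, div_one]
        linarith
    calc Tv = |h₂v - h₁v| / P ^ ν := hTvdef
      _ ≤ r / ρ ^ ν := hB
      _ ≤ r + ρ := hC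
  have habs := abs_le.1 had
  have hac0 : (0:ℝ) ≤ a ⊔ c := le_trans ha0 (le_max_left a c)
  have hPab : P - a ≤ r + ρ := by
    have h1' : a ⊔ c ≤ a + r := max_le (by linarith [hr.le]) (by linarith [habs.1])
    have h2' : P ≤ (a ⊔ c) + ρ := max_le (le_add_of_nonneg_right hρ0.le)
      (le_add_of_nonneg_left hac0)
    linarith
  have hPcb : P - c ≤ r + ρ := by
    have h1' : a ⊔ c ≤ c + r := max_le (by linarith [habs.2]) (by linarith [hr.le])
    have h2' : P ≤ (a ⊔ c) + ρ := max_le (le_add_of_nonneg_right hρ0.le)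
      (le_add_of_nonneg_left hac0)
    linarith
  have ht5b : t5 ≤ 3 * (r + ρ) := by rw [ht5eq]; linarith
  -- cost bound
  have hwdiv : w / P ^ ν = sgn := by rw [hwdef]; field_simp
  have hsqb : ∀ τ : ℝ, sq2 ((fun s : ℝ => if s ≤ t4 then (fun s : ℝ => if s ≤ t3 then (fun s : ℝ => if s ≤ t2 then (fun s : ℝ => if s ≤ t1 then (fun _ : ℝ => ((1 : ℝ), (0 : ℝ))) s else (fun _ : ℝ => ((1 : ℝ), (ν + 1) * 1)) s) s else (fun _ : ℝ => ((0 : ℝ), w / P ^ ν)) s) s else (fun _ : ℝ => ((-1 : ℝ), (ν + 1) * (-1))) s) s else (fun _ : ℝ => ((-1 : ℝ), (0 : ℝ))) s) τ) ≤ 1 + (ν + 1) ^ 2 := by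
    intro τ
    have hsor : sgn = 1 ∨ sgn = -1 := by
      rw [hsgndef]; split_ifs <;> simp
    beta_reduce
    split_ifs
    · exact sq2_bd1
    · exact sq2_bd2
    · rw [hwdiv]
      exact sq2_bd3 hsor
    · exact sq2_bd4
    · exact sq2_bd5
  have hsq0 : ∀ τ : ℝ, 0 ≤ sq2 ((fun s : ℝ => if s ≤ t4 then (fun s : ℝ => if s ≤ t3 then (fun s : ℝ => if s ≤ t2 then (fun s : ℝ => if s ≤ t1 then (fun _ : ℝ => ((1 : ℝ), (0 : ℝ))) s else (fun _ : ℝ => ((1 : ℝ), (ν + 1) * 1)) s) s else (fun _ : ℝ => ((0 : ℝ), w / P ^ ν)) s) s else (fun _ : ℝ => ((-1 : ℝ), (ν + 1) * (-1))) s) s else (fun _ : ℝ => ((-1 : ℝ), (0 : ℝ))) s) τ) := by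
    intro τ
    have h' : ∀ v : ℝ × ℝ, 0 ≤ sq2 v := fun v => by simp only [sq2]; positivity
    exact h' _
  have hmeasA : Measurable (fun s : ℝ => if s ≤ t4 then (fun s : ℝ => if s ≤ t3 then (fun s : ℝ => if s ≤ t2 then (fun s : ℝ => if s ≤ t1 then (fun _ : ℝ => ((1 : ℝ), (0 : ℝ))) s else (fun _ : ℝ => ((1 : ℝ), (ν + 1) * 1)) s) s else (fun _ : ℝ => ((0 : ℝ), w / P ^ ν)) s) s else (fun _ : ℝ => ((-1 : ℝ), (ν + 1) * (-1))) s) s else (fun _ : ℝ => ((-1 : ℝ), (0 : ℝ))) s) := G5.1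
  have hcontsq : Continuous sq2 := by
    unfold sq2
    exact (continuous_fst.pow 2).add (continuous_snd.pow 2)
  have hIL2 : IntervalIntegrable (fun τ => sq2 ((fun s : ℝ => if s ≤ t4 then (fun s : ℝ => if s ≤ t3 then (fun s : ℝ => if s ≤ t2 then (fun s : ℝ => if s ≤ t1 then (fun _ : ℝ => ((1 : ℝ), (0 : ℝ))) s else (fun _ : ℝ => ((1 : ℝ), (ν + 1) * 1)) s) s else (fun _ : ℝ => ((0 : ℝ), w / P ^ ν)) s) s else (fun _ : ℝ => ((-1 : ℝ), (ν + 1) * (-1))) s) s else (fun _ : ℝ => ((-1 : ℝ), (0 : ℝ))) s) τ)) volume 0 t5 := by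
    rw [intervalIntegrable_iff]
    refine Integrable.mono' (g := fun _ => 1 + (ν + 1) ^ 2) ?_ ?_ ?_
    · exact integrableOn_const (by rw [uIoc_of_le h05]; exact measure_Ioc_lt_top.ne)
    · exact (hcontsq.measurable.comp hmeasA).aestronglyMeasurable
    · exact Filter.Eventually.of_forall fun τ => by
        rw [Real.norm_eq_abs, abs_of_nonneg (hsq0 τ)]; exact hsqb τ
  have hcost : (∫ τ in (0:ℝ)..t5, sq2 ((fun s : ℝ => if s ≤ t4 then (fun s : ℝ => if s ≤ t3 then (fun s : ℝ => if s ≤ t2 then (fun s : ℝ => if s ≤ t1 then (fun _ : ℝ => ((1 : ℝ), (0 : ℝ))) s else (fun _ : ℝ => ((1 : ℝ), (ν + 1) * 1)) s) s else (fun _ : ℝ => ((0 : ℝ), w / P ^ ν)) s) s else (fun _ : ℝ => ((-1 : ℝ), (ν + 1) * (-1))) s) s else (fun _ : ℝ => ((-1 : ℝ), (0 : ℝ))) s) τ)) ≤ (1 + (ν + 1) ^ 2) * t5 := by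
    have h' := intervalIntegral.integral_mono_on h05 hIL2 intervalIntegrable_const
      (fun x _ => hsqb x)
    rw [intervalIntegral.integral_const, smul_eq_mul, sub_zero] at h'
    linarith [h']
  exact ⟨t5, (fun s : ℝ => if s ≤ t4 then (fun s : ℝ => if s ≤ t3 then (fun s : ℝ => if s ≤ t2 then (fun s : ℝ => if s ≤ t1 then (fun s : ℝ => ((a + 1 * (s - 0), b) : ℝ × ℝ)) s else (fun s : ℝ => ((q₁ + 1 * (s - t1), b + (q₁ + 1 * (s - t1)) ^ (ν + 1) - q₁ ^ (ν + 1)) : ℝ × ℝ)) s) s else (fun s : ℝ => ((P, h₁v + w * (s - t2)) : ℝ × ℝ)) s) s else (fun s : ℝ => ((P + (-1) * (s - t3), h₂v + (P + (-1) * (s - t3)) ^ (ν + 1) - P ^ (ν + 1)) : ℝ × ℝ)) s) s else (fun s : ℝ => ((q₂ + (-1) * (s - t4), d) : ℝ × ℝ)) s), (fun s : ℝ => if s ≤ t4 then (fun s : ℝ => if s ≤ t3 then (fun s : ℝ => if s ≤ t2 then (fun s : ℝ => if s ≤ t1 then (fun _ : ℝ => ((1 : ℝ), (0 : ℝ)))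 s else (fun _ : ℝ => ((1 : ℝ), (ν + 1) * 1)) s) s else (fun _ : ℝ => ((0 : ℝ), w / P ^ ν)) s) s else (fun _ : ℝ => ((-1 : ℝ), (ν + 1) * (-1))) s) s else (fun _ : ℝ => ((-1 : ℝ), (0 : ℝ))) s), h05, ht5b, G5, hIL2, ev5, hcost⟩

end GrAux

/-- the set `Σ = {0 ≤ x₁ ≤ 1, x₁^{ν+1} ≤ x₂ ≤ 1}` has the uniform
reachability property with a modulus of continuity. -/
theorem uniform_reachability_example
    (ν : ℝ) (hν : 0 < ν) :
    ∃ ω : ℝ → ℝ, MonotoneOn ω (Ici 0) ∧ (∀ r ∈ Ici (0 : ℝ), 0 ≤ ω r) ∧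
      Tendsto ω (𝓝[>] 0) (𝓝 0) ∧
      ∀ z₁ ∈ {p : ℝ × ℝ | 0 ≤ p.1 ∧ p.1 ≤ 1 ∧ p.1 ^ (ν + 1) ≤ p.2 ∧ p.2 ≤ 1},
        ∀ z₂ ∈ {p : ℝ × ℝ | 0 ≤ p.1 ∧ p.1 ≤ 1 ∧ p.1 ^ (ν + 1) ≤ p.2 ∧ p.2 ≤ 1},
          ∃ δ : ℝ, 0 ≤ δ ∧ δ ≤ ω (enorm2 (z₁ - z₂)) ∧
            ∃ y α : ℝ → ℝ × ℝ,
              Admissible ν {p : ℝ × ℝ | 0 ≤ p.1 ∧ p.1 ≤ 1 ∧ p.1 ^ (ν + 1) ≤ p.2 ∧ p.2 ≤ 1}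
                0 δ z₁ y α ∧
              InL2 α 0 δ ∧ y δ = z₂ ∧
              Real.sqrt (∫ τ in (0 : ℝ)..δ, sq2 (α τ)) ≤ ω (enorm2 (z₁ - z₂)) := by
  have hν1 : (0:ℝ) < ν + 1 := by linarith
  set L : ℝ := 1 + (ν + 1) ^ 2 with hLdef
  have hL2 : (2:ℝ) ≤ L := by nlinarith [sq_nonneg ν]
  set θ : ℝ := (2 * (ν + 1))⁻¹ with hθdef
  have hθ0 : 0 < θ := by rw [hθdef]; positivity
  have hθhalf : θ ≤ 1 / 2 := by
    rw [hθdef]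
    calc (2 * (ν + 1))⁻¹ ≤ 2⁻¹ := by
          apply inv_anti₀ (by norm_num)
          nlinarith
      _ = 1 / 2 := by norm_num
  have hθinv : θ ≤ (ν + 1)⁻¹ := by
    rw [hθdef]
    apply inv_anti₀ hν1
    linarith
  have hωnn : ∀ x : ℝ, 0 ≤ x → 0 ≤ 3 * L * ((min x 1) ^ θ + x) := by
    intro x hx
    have h1 : (0:ℝ) ≤ (min x 1) ^ θ := Real.rpow_nonneg (le_min hx zero_le_one) _
    have h2 : (0:ℝ) ≤ 3 * L := by linarith
    apply mul_nonneg h2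
    linarith
  refine ⟨fun x => 3 * L * ((min x 1) ^ θ + x), ?_, fun x hx => hωnn x hx, ?_, ?_⟩
  · -- monotone
    intro x hx y hy hxy
    have h1 : (0:ℝ) ≤ min x 1 := le_min hx zero_le_one
    have h2 : min x 1 ≤ min y 1 := min_le_min hxy le_rfl
    have h3 := Real.rpow_le_rpow h1 h2 hθ0.le
    have h4 : (0:ℝ) ≤ 3 * L := by linarith
    apply mul_le_mul_of_nonneg_left _ h4
    linarith
  · -- tendsto
    have h1 : ContinuousAt (fun x : ℝ => min x 1) 0 :=
      (continuous_id.min continuous_const).continuousAt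
    have h2 : ContinuousAt (fun y : ℝ => y ^ θ) (min (0:ℝ) 1) := by
      rw [show min (0:ℝ) 1 = 0 from min_eq_left zero_le_one]
      exact Real.continuousAt_rpow_const 0 θ (Or.inr hθ0.le)
    have h3 : ContinuousAt (fun x : ℝ => (min x 1) ^ θ) 0 :=
      ContinuousAt.comp (g := fun y : ℝ => y ^ θ) (f := fun x : ℝ => min x 1)
        (x := (0:ℝ)) h2 h1
    have hc : ContinuousAt (fun x : ℝ => 3 * L * ((min x 1) ^ θ + x)) 0 :=
      continuousAt_const.mul (h3.add continuousAt_id)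
    have hval : 3 * L * ((min (0:ℝ) 1) ^ θ + 0) = 0 := by
      rw [min_eq_left zero_le_one, Real.zero_rpow hθ0.ne']
      ring
    have := hc.tendsto
    rw [hval] at this
    exact tendsto_nhdsWithin_of_tendsto_nhds this
  · -- main part
    intro z₁ hz₁ z₂ hz₂
    set r := enorm2 (z₁ - z₂) with hrdef
    have hr0 : 0 ≤ r := Real.sqrt_nonneg _
    by_cases hzz : z₁ = z₂
    · refine ⟨0, le_rfl, hωnn r hr0, fun _ => z₁, fun _ => 0, ?_, ?_, hzz ▸ rfl, ?_⟩
      · refine ⟨measurable_const, IntervalIntegrable.refl, IntervalIntegrable.refl, ?_, ?_, ?_⟩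
        · intro s hs
          have hs0 : s = 0 := le_antisymm hs.2 hs.1
          subst hs0
          rw [intervalIntegral.integral_same]
          simp
        · intro s hs
          have hs0 : s = 0 := le_antisymm hs.2 hs.1
          subst hs0
          rw [intervalIntegral.integral_same]
          simp
        · intro s _
          exact hz₁
      · exact IntervalIntegrable.refl
      · rw [intervalIntegral.integral_same, Real.sqrt_zero]
        exact hωnn r hr0
    · have hrpos : 0 < r := by
        rw [hrdef]
        apply Real.sqrt_pos.2
        have hne : z₁ - z₂ ≠ 0 := sub_ne_zero.2 hzz
        have hor : (z₁ - z₂).1 ≠ 0 ∨ (z₁ - z₂).2 ≠ 0 := by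
          by_contra hcon
          push_neg at hcon
          exact hne (Prod.ext hcon.1 hcon.2)
        simp only [sq2]
        rcases hor with h | h
        · have h2 : (z₁ - z₂).1 ^ 2 ≠ 0 := pow_ne_zero 2 h
          have h3 := lt_of_le_of_ne (sq_nonneg (z₁ - z₂).1) (Ne.symm h2)
          linarith [sq_nonneg (z₁ - z₂).2]
        · have h2 : (z₁ - z₂).2 ^ 2 ≠ 0 := pow_ne_zero 2 h
          have h3 := lt_of_le_of_ne (sq_nonneg (z₁ - z₂).2) (Ne.symm h2)
          linarith [sq_nonneg (z₁ - z₂).1]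
      have hd1 : |z₁.1 - z₂.1| ≤ r := by
        rw [hrdef]
        calc |z₁.1 - z₂.1| = Real.sqrt ((z₁.1 - z₂.1) ^ 2) := (Real.sqrt_sq_eq_abs _).symm
          _ ≤ Real.sqrt (sq2 (z₁ - z₂)) := Real.sqrt_le_sqrt (by
              simp only [sq2, Prod.fst_sub, Prod.snd_sub]
              linarith [sq_nonneg (z₁.2 - z₂.2)])
      have hd2 : |z₁.2 - z₂.2| ≤ r := by
        rw [hrdef]
        calc |z₁.2 - z₂.2| = Real.sqrt ((z₁.2 - z₂.2) ^ 2) := (Real.sqrt_sq_eq_abs _).symm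
          _ ≤ Real.sqrt (sq2 (z₁ - z₂)) := Real.sqrt_le_sqrt (by
              simp only [sq2, Prod.fst_sub, Prod.snd_sub]
              linarith [sq_nonneg (z₁.1 - z₂.1)])
      obtain ⟨δ, y, α, hδ0, hδb, hAdm, hIL2, hend, hcost⟩ :=
        GrAux.key hν (fun p => Iff.rfl) hrpos z₁ z₂ hz₁ hz₂ hd1 hd2
      rw [← hLdef] at hcost
      set m' := min r 1 with hm'def
      have hm0 : 0 < m' := lt_min hrpos one_pos
      have hm1 : m' ≤ 1 := min_le_right _ _
      have hmθnn : (0:ℝ) ≤ m' ^ θ := Real.rpow_nonneg hm0.le _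
      have hρθ : m' ^ (ν + 1)⁻¹ ≤ m' ^ θ := Real.rpow_le_rpow_of_exponent_ge hm0 hm1 hθinv
      have hρnn : (0:ℝ) ≤ m' ^ (ν + 1)⁻¹ := Real.rpow_nonneg hm0.le _
      have hδω : δ ≤ 3 * L * (m' ^ θ + r) := by
        calc δ ≤ 3 * (r + m' ^ (ν + 1)⁻¹) := hδb
          _ ≤ 3 * (r + m' ^ θ) := by linarith
          _ ≤ 3 * L * (m' ^ θ + r) := by
              have h3 : (3:ℝ) ≤ 3 * L := by linarith
              have h4 : (0:ℝ) ≤ m' ^ θ + r := by linarith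
              have h5 := mul_le_mul_of_nonneg_right h3 h4
              linarith
      refine ⟨δ, hδ0, hδω, y, α, hAdm, hIL2, hend, ?_⟩
      have h1 : Real.sqrt (∫ τ in (0:ℝ)..δ, sq2 (α τ)) ≤
          Real.sqrt (3 * L * (r + m' ^ (ν + 1)⁻¹)) := by
        apply Real.sqrt_le_sqrt
        calc (∫ τ in (0:ℝ)..δ, sq2 (α τ)) ≤ L * δ := hcost
          _ ≤ L * (3 * (r + m' ^ (ν + 1)⁻¹)) :=
              mul_le_mul_of_nonneg_left hδb (by linarith)
          _ = 3 * L * (r + m' ^ (ν + 1)⁻¹) := by ring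
      have hsplit : Real.sqrt (3 * L * (r + m' ^ (ν + 1)⁻¹)) ≤
          Real.sqrt (3 * L) * (Real.sqrt r + Real.sqrt (m' ^ (ν + 1)⁻¹)) := by
        rw [Real.sqrt_mul (by linarith : (0:ℝ) ≤ 3 * L)]
        apply mul_le_mul_of_nonneg_left _ (Real.sqrt_nonneg _)
        exact GrAux.sqrt_add_le' r (m' ^ (ν + 1)⁻¹) hr0 hρnn
      have hsq_rho : Real.sqrt (m' ^ (ν + 1)⁻¹) = m' ^ θ := by
        rw [Real.sqrt_eq_rpow, ← Real.rpow_mul hm0.le]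
        congr 1
        rw [hθdef, mul_inv]
        ring
      have hsq_r : Real.sqrt r ≤ m' ^ θ + r := by
        by_cases hr1 : r ≤ 1
        · have hmr : m' = r := min_eq_left hr1
          have he : Real.sqrt r = r ^ (1/2 : ℝ) := Real.sqrt_eq_rpow r
          have hle : r ^ (1/2 : ℝ) ≤ r ^ θ :=
            Real.rpow_le_rpow_of_exponent_ge hrpos hr1 hθhalf
          rw [he, hmr]
          linarith
        · have h1r : (1:ℝ) ≤ r := le_of_not_ge hr1
          have hsr : Real.sqrt r ≤ r := GrAux.sqrt_le_self' h1r
          linarith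
      have hsqrt3L : Real.sqrt (3 * L) ≤ 3 * L / 2 := GrAux.sqrt3L_bd hL2
      have hsnn : (0:ℝ) ≤ Real.sqrt r + m' ^ θ :=
        add_nonneg (Real.sqrt_nonneg _) hmθnn
      calc Real.sqrt (∫ τ in (0:ℝ)..δ, sq2 (α τ))
          ≤ Real.sqrt (3 * L) * (Real.sqrt r + Real.sqrt (m' ^ (ν + 1)⁻¹)) :=
            h1.trans hsplit
        _ = Real.sqrt (3 * L) * (Real.sqrt r + m' ^ θ) := by rw [hsq_rho]
        _ ≤ (3 * L / 2) * (Real.sqrt r + m' ^ θ) :=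
            mul_le_mul_of_nonneg_right hsqrt3L hsnn
        _ ≤ (3 * L / 2) * ((m' ^ θ + r) + m' ^ θ) := by
            apply mul_le_mul_of_nonneg_left (by linarith) (by linarith)
        _ ≤ 3 * L * (m' ^ θ + r) := by
            have h6 : (0:ℝ) ≤ L * r := mul_nonneg (by linarith) hr0
            have h7 : 3 * L * (m' ^ θ + r) - 3 * L / 2 * ((m' ^ θ + r) + m' ^ θ)
                = 3 / 2 * (L * r) := by ring
            have h8 : (0:ℝ) ≤ 3 / 2 * (L * r) := by
              apply mul_nonneg (by norm_num) h6
            have h9 : (0:ℝ) ≤ 3 * L * (m' ^ θ + r)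
                - 3 * L / 2 * ((m' ^ θ + r) + m' ^ θ) := by rw [h7]; exact h8
            exact sub_nonneg.1 h9
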